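/- arXiv:2604.11418 — 3 statements merged into one kernel-verified Lean document; each statement's English description precedes it below -/
import Mathlib

section
/- Let x,y∈ℝ^N and let F,G,H be three closed sets in ℝ^N such that d_{x,r_1}(F,G)<ε_1 and d_{y,r_2}(G,H)<ε_2, where r_1,r_2>0 and ε_1,ε_2>0 (and the relevant sets meet the relevant balls). Then for every z∈ℝ^N and ρ>0 such that B(z,ρ+ε_1·r_1)⊆B(y,r_2) and B(z,ρ+ε_2·r_2)⊆B(x,r_1), one has d_{z,ρ}(F,H)<(ε_1·r_1+ε_2·r_2)/ρ. -/
open Metric Set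
open scoped Classical

noncomputable section

namespace DDTGen

variable {V : Type*} [NormedAddCommGroup V] [InnerProductSpace ℝ V]

/-- The cone over a finite set `X ⊆ V`: all nonnegative linear combinations of
elements of `X`.  For `X = ∅` this is `{0}`. -/
def coneOf (X : Finset V) : Set V :=
  {y | ∃ c : V → ℝ, (∀ v ∈ X, 0 ≤ c v) ∧ y = ∑ v ∈ X, c v • v}

/-- `X` is the base of a simple cone of dimension `m`: `X` consists of `m` unit
vectors and `{0} ∪ X` is affinely independent. -/
def IsSimpleBase (m : ℕ) (X : Finset V) : Prop :=
  X.card = m ∧ (∀ v ∈ X, ‖v‖ = 1) ∧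
    AffineIndependent ℝ (Subtype.val : (insert (0 : V) (X : Set V) : Set V) → V)

/-- A complex cone of dimension `m`: a finite union of distinct simple cones of
dimension `m` such that any two faces intersect in the common sub-face. -/
structure ComplexCone (V : Type*) [NormedAddCommGroup V] [InnerProductSpace ℝ V]
    (m : ℕ) where
  faces : Finset (Finset V)
  faces_nonempty : faces.Nonempty
  simple : ∀ X ∈ faces, IsSimpleBase m X
  inter_eq : ∀ X Y : Finset V, (∃ X' ∈ faces, X ⊆ X') → (∃ Y' ∈ faces, Y ⊆ Y') →
    coneOf X ∩ coneOf Y = coneOf (X ∩ Y)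

namespace ComplexCone

variable {m : ℕ}

/-- membership in `Ω_T`. -/
def inOmega (T : ComplexCone V m) (Y : Finset V) : Prop :=
  ∃ X ∈ T.faces, Y ⊆ X

/-- the underlying set of the complex cone. -/
def carrier (T : ComplexCone V m) : Set V :=
  ⋃ X ∈ T.faces, coneOf X

end ComplexCone

/-- The set of angles `∠(F₁,F₂)` of the paper: angles `∠ f₁ z f₂` with
`z ∈ C(F₁ ∩ F₂)`, `f_j ∈ C(F_j) \ C(F₁ ∩ F₂)` realizing the distance to
`C(F₁ ∩ F₂)` at `z`. -/
def angleSet (F₁ F₂ : Finset V) : Set ℝ :=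
  {θ | ∃ z ∈ coneOf (F₁ ∩ F₂),
      ∃ f₁ ∈ coneOf F₁ \ coneOf (F₁ ∩ F₂),
      ∃ f₂ ∈ coneOf F₂ \ coneOf (F₁ ∩ F₂),
      Metric.infDist f₁ (coneOf (F₁ ∩ F₂)) = dist f₁ z ∧
      Metric.infDist f₂ (coneOf (F₁ ∩ F₂)) = dist f₂ z ∧
      θ = EuclideanGeometry.angle f₁ z f₂}

/-- the non-flat condition for a complex cone. -/
def ComplexCone.NonFlat {m : ℕ} (T : ComplexCone V m) : Prop :=
  ∀ Y Z₁ Z₂ : Finset V, T.inOmega Y → T.inOmega Z₁ → T.inOmega Z₂ →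
    Y.card < m → Y = Z₁ ∩ Z₂ → Z₁.card = Y.card + 1 → Z₂.card = Y.card + 1 →
    sSup (angleSet Z₁ Z₂) < Real.pi

/-- the minimal angle `∠(T)` of a complex cone. -/
def ComplexCone.minAngle {m : ℕ} (T : ComplexCone V m) : ℝ :=
  sInf {θ | ∃ F₁ F₂ : Finset V, T.inOmega F₁ ∧ T.inOmega F₂ ∧
    F₁.Nonempty ∧ F₂.Nonempty ∧ ¬F₁ ⊆ F₂ ∧ ¬F₂ ⊆ F₁ ∧ θ = sInf (angleSet F₁ F₂)}

/-- relative interior of a (convex) set, following the paper's definition. -/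
def relInterior (F : Set V) : Set V :=
  {x | x ∈ F ∧ ∃ r > 0, (affineSpan ℝ F : Set V) ∩ Metric.ball x r ⊆ F}

/-- `RI m T`: points of `T` near which `T` coincides with an `m`-dimensional
affine plane. -/
def RI (m : ℕ) (T : Set V) : Set V :=
  {x | x ∈ T ∧ ∃ r > 0, ∃ Q : AffineSubspace ℝ V, (Q : Set V).Nonempty ∧
      Module.finrank ℝ Q.direction = m ∧
      T ∩ Metric.ball x r = (Q : Set V) ∩ Metric.ball x r}

/-- `π` is the orthogonal (nearest point) projection onto the affine subspace `P`. -/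
def IsOrthProjOnto (P : AffineSubspace ℝ V) (π : V →ᵃ[ℝ] V) : Prop :=
  (∀ y, π y ∈ P) ∧ (∀ p ∈ P, π p = p) ∧
    ∀ y : V, ∀ p ∈ P, inner ℝ (y - π y) (p - π y) = (0 : ℝ)

/-- normalized local Hausdorff distance `d_{x,r}(F₁,F₂)`. -/
def dxr {X : Type*} [PseudoMetricSpace X] (x : X) (r : ℝ) (F₁ F₂ : Set X) : ℝ :=
  (1 / r) * max (⨆ z ∈ F₂ ∩ Metric.ball x r, Metric.infDist z F₁)
                (⨆ z ∈ F₁ ∩ Metric.ball x r, Metric.infDist z F₂)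

/-- the blow-up cone `C(W ∩ B(x,r) − x)`. -/
def blowUp (W : Set V) (x : V) (r : ℝ) : Set V :=
  {y | ∃ c : ℝ, 0 ≤ c ∧ ∃ z ∈ W ∩ Metric.ball x r, y = c • (z - x)}

/-- projection of `ℝ^N` onto the first `N'` coordinates. -/
def proj1 (N' N : ℕ) (y : EuclideanSpace ℝ (Fin N)) : EuclideanSpace ℝ (Fin N') :=
  WithLp.toLp 2 (fun j => if h : (j : ℕ) < N then y ⟨(j : ℕ), h⟩ else 0)

/-- the set `T × ℝ^m × {0}` inside `ℝ^N`, where `T ⊆ ℝ^{N'}` occupies the first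
`N'` coordinates, the `ℝ^m` factor the next `m` coordinates, and the remaining
coordinates vanish. -/
def prodSet (N' N : ℕ) (T : Set (EuclideanSpace ℝ (Fin N'))) (m : ℕ) :
    Set (EuclideanSpace ℝ (Fin N)) :=
  {y | proj1 N' N y ∈ T ∧ ∀ i : Fin N, N' + m ≤ (i : ℕ) → y i = 0}

/-- data describing a set of type `m` in `ℝ^N`:
`W = R (T × ℝ^m × {0})` with `T` a non-flat complex cone of dimension `n−m`
and `R` an isometry of `ℝ^N`. -/
structure TypedCone (n N' N : ℕ) where
  m : ℕ
  m_le : m ≤ n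
  T : ComplexCone (EuclideanSpace ℝ (Fin N')) (n - m)
  nonflat : T.NonFlat
  R : EuclideanSpace ℝ (Fin N) ≃ᵢ EuclideanSpace ℝ (Fin N)

namespace TypedCone

variable {n N' N : ℕ}

/-- the underlying set `R (T × ℝ^m × {0})`. -/
def carrier (C : TypedCone n N' N) : Set (EuclideanSpace ℝ (Fin N)) :=
  C.R '' prodSet N' N C.T.carrier C.m

/-- the `d`-dimensional spine `L^d(W)`. -/
def spine (C : TypedCone n N' N) (d : ℕ) : Set (EuclideanSpace ℝ (Fin N)) :=
  if d < C.m then ∅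
  else C.R '' prodSet N' N
    (⋃ Y ∈ {Y : Finset (EuclideanSpace ℝ (Fin N')) |
        C.T.inOmega Y ∧ Y.card = d - C.m}, coneOf Y) C.m

/-- `L` is a branch of the `d`-dimensional spine of `C`. -/
def IsBranch (C : TypedCone n N' N) (d : ℕ) (L : Set (EuclideanSpace ℝ (Fin N))) : Prop :=
  C.m ≤ d ∧ ∃ Y : Finset (EuclideanSpace ℝ (Fin N')),
    C.T.inOmega Y ∧ Y.card = d - C.m ∧ L = C.R '' prodSet N' N (coneOf Y) C.m

end TypedCone

/-- `W` is a set of type `m` in `ℝ^N`. -/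
def IsTypeM (n N' N m : ℕ) (W : Set (EuclideanSpace ℝ (Fin N))) : Prop :=
  m ≤ n ∧ ∃ C : TypedCone n N' N, C.m = m ∧ C.carrier = W

/-- `𝒯𝒜`: all sets of type `m`, `0 ≤ m ≤ n`. -/
def TA (n N' N : ℕ) : Set (Set (EuclideanSpace ℝ (Fin N))) :=
  {W | ∃ m, IsTypeM n N' N m W}

/-- `𝒜(W)`: all isometric images of (stabilized) blow-up cones of `W`. -/
def calA {N : ℕ} (W : Set (EuclideanSpace ℝ (Fin N))) :
    Set (Set (EuclideanSpace ℝ (Fin N))) :=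
  {Z | ∃ R : EuclideanSpace ℝ (Fin N) ≃ᵢ EuclideanSpace ℝ (Fin N),
      ∃ x ∈ W, ∃ r : ℝ, 0 < r ∧
        (∀ r' : ℝ, 0 < r' → r' ≤ r → blowUp W x r' = blowUp W x r) ∧
        Z = R '' blowUp W x r}

/-- `𝒜(ℬ) = ∪_{W ∈ ℬ} 𝒜(W)`. -/
def calAB {N : ℕ} (ℬ : Set (Set (EuclideanSpace ℝ (Fin N)))) :
    Set (Set (EuclideanSpace ℝ (Fin N))) :=
  ⋃ W ∈ ℬ, calA W

/-- `W₁ ∼ W₂` iff they differ by an isometry of `ℝ^N`. -/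
def EquivIso {N : ℕ} (W₁ W₂ : Set (EuclideanSpace ℝ (Fin N))) : Prop :=
  ∃ R : EuclideanSpace ℝ (Fin N) ≃ᵢ EuclideanSpace ℝ (Fin N), W₁ = R '' W₂

/-- `ℬ/∼` is finite: `ℬ` is covered by finitely many isometry classes. -/
def FiniteModIso {N : ℕ} (ℬ : Set (Set (EuclideanSpace ℝ (Fin N)))) : Prop :=
  ∃ S : Set (Set (EuclideanSpace ℝ (Fin N))), S.Finite ∧ ∀ W ∈ ℬ, ∃ W₀ ∈ S, EquivIso W W₀

/-- the minimal angle constant `α(ℬ)`. -/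
def alphaB (n N' N : ℕ) (ℬ : Set (Set (EuclideanSpace ℝ (Fin N)))) : ℝ :=
  sInf {a | ∃ C : TypedCone n N' N, C.carrier ∈ calAB ℬ ∧ a = C.T.minAngle}

/-- `δ₀` is a cone-separation constant for `ℬ` (Proposition 2.10). -/
def SepConst (n N' N : ℕ) (ℬ : Set (Set (EuclideanSpace ℝ (Fin N)))) (δ₀ : ℝ) : Prop :=
  0 < δ₀ ∧ ∀ t : ℕ, t ≤ n - 1 →
    ∀ C : TypedCone n N' N, C.carrier ∈ calAB ℬ → C.m ≤ t →
    ∀ x ∈ C.spine t, ∀ W ∈ calAB ℬ,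
      (∃ k, t + 1 ≤ k ∧ k ≤ n ∧ IsTypeM n N' N k W) →
      ∀ r : ℝ, 0 < r → dxr x r C.carrier W > δ₀

/-- `n₀` is a cone-replacement constant for `ℬ` (Proposition 2.11). -/
def RepConst (n N' N : ℕ) (ℬ : Set (Set (EuclideanSpace ℝ (Fin N)))) (n₀ : ℝ) : Prop :=
  10 < n₀ ∧ ∀ t : ℕ, t ≤ n - 1 →
    ∀ C : TypedCone n N' N, C.carrier ∈ calAB ℬ → C.m ≤ t →
    ∀ (x : EuclideanSpace ℝ (Fin N)) (r : ℝ), 0 < r →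
      (C.carrier ∩ Metric.ball x r).Nonempty →
      Metric.ball x (n₀ * r) ∩ C.spine t = ∅ →
      ∃ Y ∈ calAB ℬ, (∃ u, t + 1 ≤ u ∧ u ≤ n ∧ IsTypeM n N' N u Y) ∧
        C.carrier ∩ Metric.ball x r = Y ∩ Metric.ball x r

/-- `a_m(x,r)`: the infimum of `d_{x,r}(E,W)` over sets `W ∈ 𝒜(ℬ)` of type `m`
whose `m`-spine passes through `x`. -/
def aM (n N' N : ℕ) (ℬ : Set (Set (EuclideanSpace ℝ (Fin N))))
    (E : Set (EuclideanSpace ℝ (Fin N))) (m : ℕ)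
    (x : EuclideanSpace ℝ (Fin N)) (r : ℝ) : ℝ :=
  sInf {d | ∃ C : TypedCone n N' N, C.m = m ∧ C.carrier ∈ calAB ℬ ∧ x ∈ C.spine m ∧
      d = dxr x r E C.carrier}

/-- the stratum `E_m`. -/
def Estrat (n N' N : ℕ) (ℬ : Set (Set (EuclideanSpace ℝ (Fin N))))
    (E : Set (EuclideanSpace ℝ (Fin N))) (C₀ ε : ℝ) (m : ℕ) :
    Set (EuclideanSpace ℝ (Fin N)) :=
  {x | x ∈ E ∩ Metric.ball 0 2 ∧
      ∃ rx > 0, ∀ r : ℝ, 0 < r → r < rx → aM n N' N ℬ E m x r < C₀ * ε}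

end DDTGen

namespace DDTGen

lemma le_biSup_infDist {X : Type*} [PseudoMetricSpace X] (F : Set X) (S : Set X) (C : ℝ)
    (hC : ∀ w ∈ S, infDist w F ≤ C) {g : X} (hg : g ∈ S) :
    infDist g F ≤ ⨆ w ∈ S, infDist w F := by
  have hb : BddAbove (Set.range fun w => ⨆ _ : w ∈ S, infDist w F) := by
    refine ⟨max 0 C, ?_⟩
    rintro _ ⟨w, rfl⟩
    by_cases h : w ∈ S
    · simp only [ciSup_pos h]; exact le_max_of_le_right (hC w h)
    · simp [h, Real.iSup_of_isEmpty]
  have := le_ciSup hb g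
  simpa [ciSup_pos hg] using this

lemma le_biSup_infDist_ball {X : Type*} [PseudoMetricSpace X] (F T : Set X) (c : X) (r : ℝ)
    {g : X} (hg : g ∈ T ∩ ball c r) :
    infDist g F ≤ ⨆ w ∈ T ∩ ball c r, infDist w F := by
  refine le_biSup_infDist F _ (infDist c F + r) (fun w hw => ?_) hg
  calc infDist w F ≤ infDist c F + dist w c := infDist_le_infDist_add_dist
    _ ≤ infDist c F + r := by linarith [(mem_ball.1 hw.2).le]

/-- **Lemma 2.15** (quasi-triangle inequality for `d_{x,r}`): if
`d_{x,r₁}(F,G) < ε₁` and `d_{y,r₂}(G,H) < ε₂`, then for every `z` and `ρ > 0`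
with `B(z, ρ + ε₁ r₁) ⊆ B(y, r₂)` and `B(z, ρ + ε₂ r₂) ⊆ B(x, r₁)` one has
`d_{z,ρ}(F,H) < (ε₁ r₁ + ε₂ r₂)/ρ`. -/
theorem statement8
    (N : ℕ) (x y z : EuclideanSpace ℝ (Fin N))
    (F G H : Set (EuclideanSpace ℝ (Fin N)))
    (hF : IsClosed F) (hG : IsClosed G) (hH : IsClosed H)
    (r₁ r₂ ε₁ ε₂ ρ : ℝ)
    (hr₁ : 0 < r₁) (hr₂ : 0 < r₂) (hε₁ : 0 < ε₁) (hε₂ : 0 < ε₂) (hρ : 0 < ρ)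
    (hFx : (F ∩ ball x r₁).Nonempty) (hGx : (G ∩ ball x r₁).Nonempty)
    (hGy : (G ∩ ball y r₂).Nonempty) (hHy : (H ∩ ball y r₂).Nonempty)
    (hFz : (F ∩ ball z ρ).Nonempty) (hHz : (H ∩ ball z ρ).Nonempty)
    (h₁ : dxr x r₁ F G < ε₁) (h₂ : dxr y r₂ G H < ε₂)
    (hz₁ : ball z (ρ + ε₁ * r₁) ⊆ ball y r₂)
    (hz₂ : ball z (ρ + ε₂ * r₂) ⊆ ball x r₁) :
    dxr z ρ F H < (ε₁ * r₁ + ε₂ * r₂) / ρ := by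
  have hGne : G.Nonempty := ⟨hGx.choose, hGx.choose_spec.1⟩
  set S₁ := ⨆ w ∈ G ∩ ball x r₁, infDist w F with hS₁
  set S₂ := ⨆ w ∈ F ∩ ball x r₁, infDist w G with hS₂
  set T₁ := ⨆ w ∈ H ∩ ball y r₂, infDist w G with hT₁
  set T₂ := ⨆ w ∈ G ∩ ball y r₂, infDist w H with hT₂
  have hmax₁ : max S₁ S₂ < ε₁ * r₁ := by
    rw [dxr, one_div_mul_eq_div, div_lt_iff₀ hr₁] at h₁
    exact h₁
  have hmax₂ : max T₁ T₂ < ε₂ * r₂ := by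
    rw [dxr, one_div_mul_eq_div, div_lt_iff₀ hr₂] at h₂
    exact h₂
  have hS₁lt : S₁ < ε₁ * r₁ := lt_of_le_of_lt (le_max_left _ _) hmax₁
  have hS₂lt : S₂ < ε₁ * r₁ := lt_of_le_of_lt (le_max_right _ _) hmax₁
  have hT₁lt : T₁ < ε₂ * r₂ := lt_of_le_of_lt (le_max_left _ _) hmax₂
  have hT₂lt : T₂ < ε₂ * r₂ := lt_of_le_of_lt (le_max_right _ _) hmax₂
  have hS₁0 : 0 ≤ S₁ := le_trans infDist_nonneg (le_biSup_infDist_ball F G x r₁ hGx.choose_spec)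
  have hS₂0 : 0 ≤ S₂ := le_trans infDist_nonneg (le_biSup_infDist_ball G F x r₁ hFx.choose_spec)
  have hT₁0 : 0 ≤ T₁ := le_trans infDist_nonneg (le_biSup_infDist_ball G H y r₂ hHy.choose_spec)
  have hT₂0 : 0 ≤ T₂ := le_trans infDist_nonneg (le_biSup_infDist_ball H G y r₂ hGy.choose_spec)
  -- Claim 1: for w ∈ H ∩ ball z ρ, infDist w F ≤ T₁ + S₁
  have claim1 : ∀ w ∈ H ∩ ball z ρ, infDist w F ≤ T₁ + S₁ := by
    rintro w ⟨hwH, hwz⟩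
    have hwy : w ∈ ball y r₂ := hz₁ (mem_ball.2 (lt_of_lt_of_le (mem_ball.1 hwz)
      (by nlinarith)))
    have hwG : infDist w G ≤ T₁ := le_biSup_infDist_ball G H y r₂ ⟨hwH, hwy⟩
    refine le_of_forall_pos_le_add fun δ hδ => ?_
    set δ' := min δ ((ε₂ * r₂ - T₁) / 2) with hδ'
    have hδ'0 : 0 < δ' := lt_min hδ (by linarith)
    obtain ⟨g, hgG, hgw⟩ := (infDist_lt_iff hGne).1 (show infDist w G < T₁ + δ' by linarith)
    have hgz : g ∈ ball z (ρ + ε₂ * r₂) := by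
      rw [mem_ball]
      have h1 : dist g z ≤ dist g w + dist w z := dist_triangle g w z
      have h2 : dist w z < ρ := mem_ball.1 hwz
      have h3 : δ' ≤ (ε₂ * r₂ - T₁) / 2 := min_le_right _ _
      rw [dist_comm g w] at h1
      linarith
    have hgF : infDist g F ≤ S₁ := le_biSup_infDist_ball F G x r₁ ⟨hgG, hz₂ hgz⟩
    have : infDist w F ≤ infDist g F + dist w g := infDist_le_infDist_add_dist
    have h3 : δ' ≤ δ := min_le_left _ _
    linarith
  -- Claim 2: for w ∈ F ∩ ball z ρ, infDist w H ≤ S₂ + T₂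
  have claim2 : ∀ w ∈ F ∩ ball z ρ, infDist w H ≤ S₂ + T₂ := by
    rintro w ⟨hwF, hwz⟩
    have hwx : w ∈ ball x r₁ := hz₂ (mem_ball.2 (lt_of_lt_of_le (mem_ball.1 hwz)
      (by nlinarith)))
    have hwG : infDist w G ≤ S₂ := le_biSup_infDist_ball G F x r₁ ⟨hwF, hwx⟩
    refine le_of_forall_pos_le_add fun δ hδ => ?_
    set δ' := min δ ((ε₁ * r₁ - S₂) / 2) with hδ'
    have hδ'0 : 0 < δ' := lt_min hδ (by linarith)
    obtain ⟨g, hgG, hgw⟩ := (infDist_lt_iff hGne).1 (show infDist w G < S₂ + δ' by linarith)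
    have hgz : g ∈ ball z (ρ + ε₁ * r₁) := by
      rw [mem_ball]
      have h1 : dist g z ≤ dist g w + dist w z := dist_triangle g w z
      have h2 : dist w z < ρ := mem_ball.1 hwz
      have h3 : δ' ≤ (ε₁ * r₁ - S₂) / 2 := min_le_right _ _
      rw [dist_comm g w] at h1
      linarith
    have hgH : infDist g H ≤ T₂ := le_biSup_infDist_ball H G y r₂ ⟨hgG, hz₁ hgz⟩
    have : infDist w H ≤ infDist g H + dist w g := infDist_le_infDist_add_dist
    have h3 : δ' ≤ δ := min_le_left _ _
    linarith
  -- bound the two sups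
  have sup1 : (⨆ w ∈ H ∩ ball z ρ, infDist w F) ≤ T₁ + S₁ := by
    refine Real.iSup_le (fun w => Real.iSup_le (fun hw => claim1 w hw) (by linarith)) (by linarith)
  have sup2 : (⨆ w ∈ F ∩ ball z ρ, infDist w H) ≤ S₂ + T₂ := by
    refine Real.iSup_le (fun w => Real.iSup_le (fun hw => claim2 w hw) (by linarith)) (by linarith)
  have hmax : max (⨆ w ∈ H ∩ ball z ρ, infDist w F) (⨆ w ∈ F ∩ ball z ρ, infDist w H)
      < ε₁ * r₁ + ε₂ * r₂ := by
    rw [max_lt_iff]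
    constructor <;> linarith
  calc dxr z ρ F H
      = (1/ρ) * max (⨆ w ∈ H ∩ ball z ρ, infDist w F) (⨆ w ∈ F ∩ ball z ρ, infDist w H) := rfl
    _ < (1/ρ) * (ε₁ * r₁ + ε₂ * r₂) := by
        exact mul_lt_mul_of_pos_left hmax (by positivity)
    _ = (ε₁ * r₁ + ε₂ * r₂) / ρ := one_div_mul_eq_div _ _

end DDTGen
end
end

section
/- Let ℬ⊂𝒯𝒜 be such that ℬ/∼ is finite, let δ_0 and n_0 be the cone-separation and cone-replacement constants of ℬ, and write 𝒜(k) for the sets of type k in 𝒜(ℬ). Let 0≤m<n, let W∈𝒜(m) have its m-spine passing through x, and suppose d_{x,r}(W,Z)<τ for some Z∈𝒜(ℬ) and some τ≤δ_0. Then Z∈∪_{k=0}^m 𝒜(k), and dist(x, L^m(Z)) < n_0·(1+δ_0^{−1})·τ·r. -/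
open Metric Set
open scoped Classical

noncomputable section

namespace DDTGen


/-! ### Auxiliary lemmas -/

section AuxCone

variable {V : Type*} [NormedAddCommGroup V] [InnerProductSpace ℝ V]

lemma zero_mem_coneOf (X : Finset V) : (0 : V) ∈ coneOf X :=
  ⟨fun _ => 0, fun _ _ => le_rfl, by simp⟩

lemma smul_mem_coneOf {X : Finset V} {c : ℝ} (hc : 0 ≤ c) {y : V} (hy : y ∈ coneOf X) :
    c • y ∈ coneOf X := by
  obtain ⟨f, hf, rfl⟩ := hy
  refine ⟨fun v => c * f v, fun v hv => mul_nonneg hc (hf v hv), ?_⟩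
  rw [Finset.smul_sum]
  refine Finset.sum_congr rfl fun v _ => ?_
  rw [smul_smul]

lemma coneOf_empty : coneOf (∅ : Finset V) = {0} := by
  ext y
  constructor
  · rintro ⟨c, -, rfl⟩; simp
  · rintro rfl; exact zero_mem_coneOf ∅

lemma ComplexCone.zero_mem_carrier {m : ℕ} (T : ComplexCone V m) : (0 : V) ∈ T.carrier := by
  obtain ⟨X, hX⟩ := T.faces_nonempty
  exact Set.mem_biUnion hX (zero_mem_coneOf X)

lemma ComplexCone.smul_mem_carrier {m : ℕ} (T : ComplexCone V m) {c : ℝ} (hc : 0 ≤ c) {y : V}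
    (hy : y ∈ T.carrier) : c • y ∈ T.carrier := by
  rw [ComplexCone.carrier, Set.mem_iUnion₂] at hy ⊢
  obtain ⟨X, hX, hyX⟩ := hy
  exact ⟨X, hX, smul_mem_coneOf hc hyX⟩

end AuxCone

section AuxProd

variable {n N' N : ℕ}

lemma proj1_zero : proj1 N' N (0 : EuclideanSpace ℝ (Fin N)) = 0 := by
  ext j
  by_cases h : (j : ℕ) < N <;> simp [proj1, h]

lemma proj1_add (y z : EuclideanSpace ℝ (Fin N)) :
    proj1 N' N (y + z) = proj1 N' N y + proj1 N' N z := by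
  ext j
  by_cases h : (j : ℕ) < N <;> simp [proj1, h]

lemma proj1_smul (c : ℝ) (y : EuclideanSpace ℝ (Fin N)) :
    proj1 N' N (c • y) = c • proj1 N' N y := by
  ext j
  by_cases h : (j : ℕ) < N <;> simp [proj1, h]

lemma proj1_sub (y z : EuclideanSpace ℝ (Fin N)) :
    proj1 N' N (y - z) = proj1 N' N y - proj1 N' N z := by
  ext j
  by_cases h : (j : ℕ) < N <;> simp [proj1, h]

lemma zero_mem_prodSet {T : Set (EuclideanSpace ℝ (Fin N'))} {m : ℕ}
    (hT : (0 : EuclideanSpace ℝ (Fin N')) ∈ T) :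
    (0 : EuclideanSpace ℝ (Fin N)) ∈ prodSet N' N T m :=
  ⟨by rw [proj1_zero]; exact hT, fun i _ => rfl⟩

lemma prodSet_zero_subset {T : Set (EuclideanSpace ℝ (Fin N'))} {m : ℕ}
    (hT : (0 : EuclideanSpace ℝ (Fin N')) ∈ T) :
    prodSet N' N ({0} : Set (EuclideanSpace ℝ (Fin N'))) m ⊆ prodSet N' N T m := by
  rintro y ⟨h1, h2⟩
  rw [Set.mem_singleton_iff] at h1
  exact ⟨by rw [h1]; exact hT, h2⟩

lemma combo_mem_prodSet {T : Set (EuclideanSpace ℝ (Fin N'))}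
    (hT : ∀ c : ℝ, 0 ≤ c → ∀ ζ ∈ T, c • ζ ∈ T)
    {m : ℕ} {w p : EuclideanSpace ℝ (Fin N)}
    (hw : w ∈ prodSet N' N ({0} : Set (EuclideanSpace ℝ (Fin N'))) m)
    (hp : p ∈ prodSet N' N T m) {t : ℝ} (ht : 0 ≤ t) :
    w + t • (p - w) ∈ prodSet N' N T m := by
  obtain ⟨hw1, hw2⟩ := hw
  obtain ⟨hp1, hp2⟩ := hp
  rw [Set.mem_singleton_iff] at hw1
  constructor
  · rw [proj1_add, proj1_smul, proj1_sub, hw1, sub_zero, zero_add]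
    exact hT t ht _ hp1
  · intro i hi
    have h1 := hw2 i hi
    have h2 := hp2 i hi
    simp only [PiLp.add_apply, PiLp.smul_apply, PiLp.sub_apply, h1, h2, smul_eq_mul]
    ring

/-- Mazur–Ulam: an isometry equivalence of a Euclidean space is affine. -/
lemma isometryEquiv_combo (f : EuclideanSpace ℝ (Fin N) ≃ᵢ EuclideanSpace ℝ (Fin N))
    (w p : EuclideanSpace ℝ (Fin N)) (t : ℝ) :
    f (w + t • (p - w)) = f w + t • (f p - f w) := by
  set A := f.toRealAffineIsometryEquiv with hA
  have hcoe : ∀ y, A y = f y := fun y => rfl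
  have hL : ∀ (v q : EuclideanSpace ℝ (Fin N)),
      A (v + q) = A.linearIsometryEquiv v + A q := by
    intro v q
    have h := A.map_vadd q v
    simpa [vadd_eq_add] using h
  have h2 : A.linearIsometryEquiv (p - w) = f p - f w := by
    have h := hL (p - w) w
    have h' : p - w + w = p := by abel
    rw [h', hcoe, hcoe] at h
    rw [eq_sub_iff_add_eq, ← h]
  have h3 : w + t • (p - w) = t • (p - w) + w := by abel
  rw [← hcoe, h3, hL, A.linearIsometryEquiv.map_smul, h2, hcoe]
  abel

end AuxProd

section AuxTyped

variable {n N' N : ℕ}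

/-- translate a typed cone by a vector. -/
def TypedCone.translate (D : TypedCone n N' N) (v : EuclideanSpace ℝ (Fin N)) :
    TypedCone n N' N :=
  ⟨D.m, D.m_le, D.T, D.nonflat, D.R.trans (IsometryEquiv.addLeft v)⟩

lemma TypedCone.translate_carrier (D : TypedCone n N' N) (v : EuclideanSpace ℝ (Fin N)) :
    (D.translate v).carrier = (fun z => v + z) '' D.carrier := by
  show (⇑(D.R.trans (IsometryEquiv.addLeft v))) '' prodSet N' N D.T.carrier D.m =
    (fun z => v + z) '' (⇑D.R '' prodSet N' N D.T.carrier D.m)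
  rw [Set.image_image]
  apply Set.image_congr
  intro y _
  simp [IsometryEquiv.trans_apply]

lemma TypedCone.spine_self (D : TypedCone n N' N) :
    D.spine D.m = D.R '' prodSet N' N ({0} : Set (EuclideanSpace ℝ (Fin N'))) D.m := by
  rw [TypedCone.spine, if_neg (lt_irrefl D.m)]
  have h : (⋃ Y ∈ {Y : Finset (EuclideanSpace ℝ (Fin N')) |
      D.T.inOmega Y ∧ Y.card = D.m - D.m}, coneOf Y) =
      ({0} : Set (EuclideanSpace ℝ (Fin N'))) := by
    ext ζ
    simp only [Set.mem_iUnion, Set.mem_setOf_eq, Set.mem_singleton_iff, Nat.sub_self]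
    constructor
    · rintro ⟨Y, ⟨⟨-, hcard⟩, hζ⟩⟩
      rw [Finset.card_eq_zero.mp hcard, coneOf_empty] at hζ
      exact hζ
    · rintro rfl
      obtain ⟨X, hX⟩ := D.T.faces_nonempty
      exact ⟨∅, ⟨⟨X, hX, Finset.empty_subset X⟩, Finset.card_empty⟩, zero_mem_coneOf ∅⟩
  rw [h]

lemma prodSet_zero_closed {m : ℕ} :
    IsClosed (prodSet N' N ({0} : Set (EuclideanSpace ℝ (Fin N'))) m) := by
  have hEq : prodSet N' N ({0} : Set (EuclideanSpace ℝ (Fin N'))) m =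
      (⋂ j : Fin N', {y : EuclideanSpace ℝ (Fin N) | proj1 N' N y j = 0}) ∩
      (⋂ i : Fin N, ⋂ (_ : N' + m ≤ (i : ℕ)), {y : EuclideanSpace ℝ (Fin N) | y i = 0}) := by
    ext y
    simp only [Set.mem_inter_iff, Set.mem_iInter, Set.mem_setOf_eq]
    constructor
    · rintro ⟨h1, h2⟩
      rw [Set.mem_singleton_iff] at h1
      exact ⟨fun j => by rw [h1]; rfl, fun i hi => h2 i hi⟩
    · rintro ⟨h1, h2⟩
      refine ⟨Set.mem_singleton_iff.mpr (by ext j; simpa using h1 j), fun i hi => h2 i hi⟩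
  rw [hEq]
  apply IsClosed.inter
  · apply isClosed_iInter
    intro j
    by_cases h : (j : ℕ) < N
    · have : {y : EuclideanSpace ℝ (Fin N) | proj1 N' N y j = 0} =
          {y : EuclideanSpace ℝ (Fin N) | y ⟨(j : ℕ), h⟩ = 0} := by
        ext y; simp [proj1, h]
      rw [this]
      exact isClosed_eq (EuclideanSpace.proj (⟨(j : ℕ), h⟩ : Fin N)).continuous continuous_const
    · have : {y : EuclideanSpace ℝ (Fin N) | proj1 N' N y j = 0} = Set.univ := by
        ext y; simp [proj1, h]
      rw [this]; exact isClosed_univ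
  · apply isClosed_iInter
    intro i
    apply isClosed_iInter
    intro _
    exact isClosed_eq (EuclideanSpace.proj i).continuous continuous_const

lemma TypedCone.spine_self_closed (D : TypedCone n N' N) : IsClosed (D.spine D.m) := by
  rw [TypedCone.spine_self]
  have h : ⇑D.R '' prodSet N' N ({0} : Set (EuclideanSpace ℝ (Fin N'))) D.m =
      ⇑D.R.symm ⁻¹' prodSet N' N ({0} : Set (EuclideanSpace ℝ (Fin N'))) D.m := by
    ext z
    constructor
    · rintro ⟨w, hw, rfl⟩; simpa using hw
    · intro hz; exact ⟨D.R.symm z, hz, by simp⟩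
  rw [h]
  exact prodSet_zero_closed.preimage D.R.symm.continuous

lemma TypedCone.spine_self_nonempty (D : TypedCone n N' N) : (D.spine D.m).Nonempty := by
  rw [TypedCone.spine_self]
  exact ⟨D.R 0, 0, zero_mem_prodSet rfl, rfl⟩

lemma TypedCone.spine_self_subset_carrier (D : TypedCone n N' N) :
    D.spine D.m ⊆ D.carrier := by
  rw [TypedCone.spine_self, TypedCone.carrier]
  exact Set.image_mono (prodSet_zero_subset D.T.zero_mem_carrier)

lemma TypedCone.carrier_nonempty (D : TypedCone n N' N) : D.carrier.Nonempty :=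
  ⟨D.R 0, 0, zero_mem_prodSet D.T.zero_mem_carrier, rfl⟩

lemma TypedCone.carrier_eq_spine_of_top (D : TypedCone n N' N) (h : n ≤ D.m) :
    D.carrier = D.spine D.m := by
  rw [TypedCone.spine_self]
  have hT : D.T.carrier = ({0} : Set (EuclideanSpace ℝ (Fin N'))) := by
    ext ζ
    rw [ComplexCone.carrier]
    simp only [Set.mem_iUnion, Set.mem_singleton_iff]
    constructor
    · rintro ⟨X, hX, hζ⟩
      have hc := (D.T.simple X hX).1
      have hX0 : X = ∅ := Finset.card_eq_zero.mp (by omega)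
      rw [hX0, coneOf_empty] at hζ
      exact hζ
    · rintro rfl
      obtain ⟨X, hX⟩ := D.T.faces_nonempty
      exact ⟨X, hX, zero_mem_coneOf X⟩
  rw [TypedCone.carrier, hT]

/-- The blow-up of a typed cone at a point of its `m`-spine is its translate. -/
lemma blowUp_spine_vertex (D : TypedCone n N' N) {x₀ : EuclideanSpace ℝ (Fin N)}
    (hx₀ : x₀ ∈ D.spine D.m) {r : ℝ} (hr : 0 < r) :
    blowUp D.carrier x₀ r = (D.translate (-x₀)).carrier := by
  rw [TypedCone.spine_self] at hx₀
  obtain ⟨w, hw, hwx⟩ := hx₀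
  have hwP : w ∈ prodSet N' N D.T.carrier D.m :=
    prodSet_zero_subset D.T.zero_mem_carrier hw
  have hx₀c : x₀ ∈ D.carrier := ⟨w, hwP, hwx⟩
  have hTs : ∀ c : ℝ, 0 ≤ c → ∀ ζ ∈ D.T.carrier, c • ζ ∈ D.T.carrier :=
    fun c hc ζ hζ => D.T.smul_mem_carrier hc hζ
  rw [TypedCone.translate_carrier]
  ext z
  constructor
  · rintro ⟨c, hc, z', ⟨hz'c, -⟩, rfl⟩
    obtain ⟨p, hp, rfl⟩ := hz'c
    refine ⟨D.R (w + c • (p - w)), ⟨w + c • (p - w), combo_mem_prodSet hTs hw hp hc, rfl⟩, ?_⟩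
    rw [isometryEquiv_combo, hwx]
    exact neg_add_cancel_left x₀ (c • (D.R p - x₀))
  · rintro ⟨y, ⟨p, hp, rfl⟩, rfl⟩
    by_cases hy0 : D.R p = x₀
    · refine ⟨0, le_rfl, x₀, ⟨hx₀c, mem_ball_self hr⟩, ?_⟩
      rw [hy0]
      simp
    · set ζ := D.R p - x₀ with hζdef
      have hζ0 : ζ ≠ 0 := sub_ne_zero.mpr hy0
      have hζn : (0 : ℝ) < ‖ζ‖ := norm_pos_iff.mpr hζ0
      set s := r / (2 * ‖ζ‖) with hsdef
      have hs : 0 < s := by positivity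
      refine ⟨2 * ‖ζ‖ / r, by positivity, D.R (w + s • (p - w)),
        ⟨⟨w + s • (p - w), combo_mem_prodSet hTs hw hp hs.le, rfl⟩, ?_⟩, ?_⟩
      · rw [mem_ball, isometryEquiv_combo, hwx, dist_eq_norm]
        have h1 : x₀ + s • (D.R p - x₀) - x₀ = s • ζ := by
          rw [← hζdef]; exact add_sub_cancel_left x₀ (s • ζ)
        rw [h1, norm_smul, Real.norm_eq_abs, abs_of_pos hs]
        have hζne : ‖ζ‖ ≠ 0 := ne_of_gt hζn
        have hrne : r ≠ 0 := ne_of_gt hr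
        have h2 : s * ‖ζ‖ = r / 2 := by
          rw [hsdef]
          field_simp
        rw [h2]
        linarith
      · rw [isometryEquiv_combo, hwx]
        have h1 : x₀ + s • (D.R p - x₀) - x₀ = s • ζ := by
          rw [← hζdef]; exact add_sub_cancel_left x₀ (s • ζ)
        rw [h1, smul_smul]
        have hζne : ‖ζ‖ ≠ 0 := ne_of_gt hζn
        have hrne : r ≠ 0 := ne_of_gt hr
        have h2 : 2 * ‖ζ‖ / r * s = 1 := by
          rw [hsdef]; field_simp
        rw [h2, one_smul]
        show -x₀ + D.R p = ζ
        rw [hζdef, neg_add_eq_sub]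

lemma TypedCone.carrier_mem_calA (D : TypedCone n N' N) : D.carrier ∈ calA D.carrier := by
  have hx₀sp : D.R 0 ∈ D.spine D.m := by
    rw [TypedCone.spine_self]
    exact ⟨0, zero_mem_prodSet rfl, rfl⟩
  have hx₀c : D.R 0 ∈ D.carrier := D.spine_self_subset_carrier hx₀sp
  refine ⟨IsometryEquiv.addLeft (D.R 0), D.R 0, hx₀c, 1, one_pos, ?_, ?_⟩
  · intro r' h1 h2
    rw [blowUp_spine_vertex D hx₀sp h1, blowUp_spine_vertex D hx₀sp one_pos]
  · rw [blowUp_spine_vertex D hx₀sp one_pos, TypedCone.translate_carrier]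
    rw [← Set.image_comp]
    have h : (⇑(IsometryEquiv.addLeft (D.R 0)) ∘ fun z => -D.R 0 + z) = id := by
      funext z
      exact add_neg_cancel_left (D.R 0) z
    rw [h, Set.image_id]

lemma mem_calAB_self {ℬ : Set (Set (EuclideanSpace ℝ (Fin N)))}
    (hB : ℬ ⊆ TA n N' N) {W : Set (EuclideanSpace ℝ (Fin N))} (hW : W ∈ ℬ) :
    W ∈ calAB ℬ := by
  obtain ⟨m₀, hm₀, E, hEm, hEc⟩ := hB hW
  have h := E.carrier_mem_calA
  rw [hEc] at h
  exact Set.mem_biUnion hW h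

lemma blowUp_congr {W₁ W₂ : Set (EuclideanSpace ℝ (Fin N))} {x : EuclideanSpace ℝ (Fin N)}
    {r : ℝ} (h : W₁ ∩ Metric.ball x r = W₂ ∩ Metric.ball x r) :
    blowUp W₁ x r = blowUp W₂ x r := by
  unfold blowUp
  rw [h]

lemma inter_ball_eq_of_le {X : Type*} [PseudoMetricSpace X] {W₁ W₂ : Set X} {x : X}
    {r r' : ℝ} (h : W₁ ∩ Metric.ball x r = W₂ ∩ Metric.ball x r) (hle : r' ≤ r) :
    W₁ ∩ Metric.ball x r' = W₂ ∩ Metric.ball x r' := by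
  have hb : Metric.ball x r' = Metric.ball x r ∩ Metric.ball x r' :=
    (Set.inter_eq_self_of_subset_right (Metric.ball_subset_ball hle)).symm
  rw [hb, ← Set.inter_assoc, h, Set.inter_assoc]

/-- Key descent lemma: a stabilized blow-up of a typed-cone carrier in `𝒜(ℬ)` is
again the carrier of a typed cone, given the replacement property. -/
lemma blowUp_typed {ℬ : Set (Set (EuclideanSpace ℝ (Fin N)))} {n₀ : ℝ}
    (hn₀ : RepConst n N' N ℬ n₀) :
    ∀ d : ℕ, ∀ D : TypedCone n N' N, n - D.m ≤ d → D.carrier ∈ calAB ℬ →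
      ∀ x₀ ∈ D.carrier, ∀ r₀ : ℝ, 0 < r₀ →
      (∀ r' : ℝ, 0 < r' → r' ≤ r₀ → blowUp D.carrier x₀ r' = blowUp D.carrier x₀ r₀) →
      ∃ D' : TypedCone n N' N, D'.carrier = blowUp D.carrier x₀ r₀ := by
  intro d
  induction d with
  | zero =>
    intro D hd hcal x₀ hx₀ r₀ hr₀ _
    by_cases hsp : x₀ ∈ D.spine D.m
    · exact ⟨D.translate (-x₀), (blowUp_spine_vertex D hsp hr₀).symm⟩
    · exfalso
      apply hsp
      have h : n ≤ D.m := by omega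
      rw [← D.carrier_eq_spine_of_top h]
      exact hx₀
  | succ d ih =>
    intro D hd hcal x₀ hx₀ r₀ hr₀ hstab
    by_cases hsp : x₀ ∈ D.spine D.m
    · exact ⟨D.translate (-x₀), (blowUp_spine_vertex D hsp hr₀).symm⟩
    · have hmn : D.m < n := by
        by_contra h
        push_neg at h
        exact hsp (by rw [← D.carrier_eq_spine_of_top h]; exact hx₀)
      have hcl := D.spine_self_closed
      have hne := D.spine_self_nonempty
      have hpos : 0 < Metric.infDist x₀ (D.spine D.m) :=
        (hcl.notMem_iff_infDist_pos hne).mp hsp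
      have h10 := hn₀.1
      have hn₀pos : (0 : ℝ) < n₀ := by linarith
      set δ := Metric.infDist x₀ (D.spine D.m) with hδdef
      set rh := min (δ / (2 * n₀)) r₀ with hrhdef
      have hrhpos : 0 < rh := lt_min (by positivity) hr₀
      have hrhr₀ : rh ≤ r₀ := min_le_right _ _
      have hmiss : Metric.ball x₀ (n₀ * rh) ∩ D.spine D.m = ∅ := by
        rw [Set.eq_empty_iff_forall_notMem]
        rintro y ⟨hyb, hysp⟩
        have h1 : δ ≤ dist x₀ y := Metric.infDist_le_dist_of_mem hysp
        have h2 : dist y x₀ < n₀ * rh := mem_ball.mp hyb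
        rw [dist_comm] at h2
        have h3 : n₀ * rh ≤ n₀ * (δ / (2 * n₀)) :=
          mul_le_mul_of_nonneg_left (min_le_left _ _) hn₀pos.le
        have h4 : n₀ * (δ / (2 * n₀)) = δ / 2 := by
          field_simp
        linarith
      obtain ⟨Y, hYcal, ⟨u, hu1, hu2, hYtyped⟩, hagree⟩ :=
        hn₀.2 D.m (by omega) D hcal le_rfl x₀ rh hrhpos
          ⟨x₀, hx₀, mem_ball_self hrhpos⟩ hmiss
      obtain ⟨hun, DY, hDYm, hDYc⟩ := hYtyped
      have hx₀Y : x₀ ∈ Y := by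
        have h := Set.mem_inter hx₀ (mem_ball_self hrhpos)
        rw [hagree] at h
        exact h.1
      have key : ∀ r' : ℝ, 0 < r' → r' ≤ rh →
          blowUp Y x₀ r' = blowUp D.carrier x₀ r₀ := by
        intro r' h1 h2
        rw [← blowUp_congr (inter_ball_eq_of_le hagree h2)]
        exact hstab r' h1 (h2.trans hrhr₀)
      have hstabY : ∀ r' : ℝ, 0 < r' → r' ≤ rh →
          blowUp DY.carrier x₀ r' = blowUp DY.carrier x₀ rh := by
        intro r' h1 h2
        rw [hDYc, key r' h1 h2, key rh hrhpos le_rfl]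
      obtain ⟨D', hD'⟩ := ih DY (by omega) (by rw [hDYc]; exact hYcal) x₀
        (by rw [hDYc]; exact hx₀Y) rh hrhpos hstabY
      refine ⟨D', ?_⟩
      rw [hD', hDYc, key rh hrhpos le_rfl]

end AuxTyped

section AuxSup

lemma le_biSup {α : Type*} {f : α → ℝ} {S : Set α} {B : ℝ}
    (hB : ∀ z ∈ S, f z ≤ B) {z₀ : α} (hz : z₀ ∈ S) : f z₀ ≤ ⨆ z ∈ S, f z := by
  have hbdd : BddAbove (Set.range fun z => ⨆ _ : z ∈ S, f z) := by
    refine ⟨max B 0, ?_⟩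
    rintro y ⟨z, rfl⟩
    exact Real.iSup_le (fun h => le_max_of_le_left (hB z h)) (le_max_right _ _)
  have h1 : f z₀ ≤ ⨆ _ : z₀ ∈ S, f z₀ := by
    refine le_ciSup (f := fun _ : z₀ ∈ S => f z₀) ⟨f z₀, ?_⟩ hz
    rintro y ⟨-, rfl⟩
    exact le_rfl
  exact h1.trans (le_ciSup hbdd z₀)

lemma biSup_le {α : Type*} {f : α → ℝ} {S : Set α} {B : ℝ} (hB0 : 0 ≤ B)
    (hB : ∀ z ∈ S, f z ≤ B) : (⨆ z ∈ S, f z) ≤ B :=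
  Real.iSup_le (fun z => Real.iSup_le (fun h => hB z h) hB0) hB0

lemma dxr_nonneg {X : Type*} [PseudoMetricSpace X] {x : X} {r : ℝ} (hr : 0 < r)
    (F₁ F₂ : Set X) : 0 ≤ dxr x r F₁ F₂ := by
  apply mul_nonneg (by positivity)
  exact le_max_of_le_left
    (Real.iSup_nonneg fun _ => Real.iSup_nonneg fun _ => Metric.infDist_nonneg)

lemma sups_lt_of_dxr_lt {X : Type*} [PseudoMetricSpace X] {x : X} {r τ : ℝ} (hr : 0 < r)
    {F₁ F₂ : Set X} (h : dxr x r F₁ F₂ < τ) :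
    (⨆ z ∈ F₂ ∩ Metric.ball x r, Metric.infDist z F₁) < τ * r ∧
    (⨆ z ∈ F₁ ∩ Metric.ball x r, Metric.infDist z F₂) < τ * r := by
  unfold dxr at h
  rw [one_div, inv_mul_lt_iff₀ hr, mul_comm] at h
  exact max_lt_iff.mp h

lemma dxr_le_of_bounds {X : Type*} [PseudoMetricSpace X] {x : X} {r B : ℝ} (hr : 0 < r)
    {F₁ F₂ : Set X} (hB : 0 ≤ B)
    (h1 : ∀ z ∈ F₂ ∩ Metric.ball x r, Metric.infDist z F₁ ≤ B)
    (h2 : ∀ z ∈ F₁ ∩ Metric.ball x r, Metric.infDist z F₂ ≤ B) :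
    dxr x r F₁ F₂ ≤ (1 / r) * B :=
  mul_le_mul_of_nonneg_left (max_le (biSup_le hB h1) (biSup_le hB h2)) (by positivity)

lemma infDist_bound_on_ball {X : Type*} [PseudoMetricSpace X] {F G : Set X} {f₀ : X}
    (hf₀ : f₀ ∈ F) {x : X} {r : ℝ} :
    ∀ z ∈ G ∩ Metric.ball x r, Metric.infDist z F ≤ r + dist x f₀ := by
  rintro z ⟨-, hzb⟩
  have h1 : Metric.infDist z F ≤ dist z f₀ := Metric.infDist_le_dist_of_mem hf₀
  have h2 : dist z f₀ ≤ dist z x + dist x f₀ := dist_triangle z x f₀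
  have h3 : dist z x < r := mem_ball.mp hzb
  linarith

end AuxSup

/-- **Lemma 2.16**: let `W ∈ 𝒜(ℬ)` be of type `m < n` with `m`-spine through
`x`, and suppose `d_{x,r}(W,Z) < τ ≤ δ₀` for some `Z ∈ 𝒜(ℬ)`.  Then `Z` has
type `k ≤ m` and `dist(x, L^m(Z)) < n₀ (1 + δ₀⁻¹) τ r`. -/
theorem statement9
    (n N' N : ℕ) (hn : 0 < n) (hnN' : n < N') (hN'N : N' + n ≤ N)
    (ℬ : Set (Set (EuclideanSpace ℝ (Fin N))))
    (hB : ℬ ⊆ TA n N' N) (hBfin : FiniteModIso ℬ)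
    (δ₀ n₀ : ℝ) (hδ : SepConst n N' N ℬ δ₀) (hδ' : δ₀ < 1 / 10)
    (hn₀ : RepConst n N' N ℬ n₀)
    (m : ℕ) (hm : m < n)
    (C : TypedCone n N' N) (hCm : C.m = m) (hCB : C.carrier ∈ calAB ℬ)
    (x : EuclideanSpace ℝ (Fin N)) (hx : x ∈ C.spine m)
    (Z : Set (EuclideanSpace ℝ (Fin N))) (hZ : Z ∈ calAB ℬ)
    (r τ : ℝ) (hr : 0 < r) (hτ : τ ≤ δ₀)
    (hdxr : dxr x r C.carrier Z < τ) :
    (∃ k ≤ m, IsTypeM n N' N k Z) ∧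
    ∃ D : TypedCone n N' N, D.carrier = Z ∧ D.m ≤ m ∧
      Metric.infDist x (D.spine m) < n₀ * (1 + δ₀⁻¹) * τ * r := by
  subst hCm
  -- extract the blow-up data of `Z` and type it via the descent lemma
  rcases Set.mem_iUnion₂.mp hZ with ⟨W₀, hW₀B, hZW⟩
  obtain ⟨R, x₀, hx₀, r₀, hr₀, hstab, hZeq⟩ := hZW
  obtain ⟨m₀, hm₀n, E, hEm, hEc⟩ := hB hW₀B
  have hEcal : E.carrier ∈ calAB ℬ := by
    rw [hEc]; exact mem_calAB_self hB hW₀B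
  have hx₀E : x₀ ∈ E.carrier := by rw [hEc]; exact hx₀
  have hstabE : ∀ r' : ℝ, 0 < r' → r' ≤ r₀ →
      blowUp E.carrier x₀ r' = blowUp E.carrier x₀ r₀ := by
    intro r' h1 h2
    rw [hEc]
    exact hstab r' h1 h2
  obtain ⟨D₁, hD₁⟩ := blowUp_typed hn₀ n E (by omega) hEcal x₀ hx₀E r₀ hr₀ hstabE
  set D₂ : TypedCone n N' N := ⟨D₁.m, D₁.m_le, D₁.T, D₁.nonflat, D₁.R.trans R⟩ with hD₂def
  have hD₂c : D₂.carrier = Z := by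
    rw [hZeq]
    have himg : D₂.carrier = R '' D₁.carrier := by
      show (⇑(D₁.R.trans R)) '' prodSet N' N D₁.T.carrier D₁.m =
        ⇑R '' (⇑D₁.R '' prodSet N' N D₁.T.carrier D₁.m)
      rw [Set.image_image]
      apply Set.image_congr
      intro y _
      exact IsometryEquiv.trans_apply _ _ _
    rw [himg, hD₁, hEc]
  have hZtyped : IsTypeM n N' N D₂.m Z := ⟨D₂.m_le, D₂, rfl, hD₂c⟩
  have hτpos : 0 < τ := lt_of_le_of_lt (dxr_nonneg hr C.carrier Z) hdxr
  have hδ₀pos : 0 < δ₀ := hδ.1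
  -- the type of Z is at most C.m, by the separation property
  have hkm : D₂.m ≤ C.m := by
    by_contra hk
    push_neg at hk
    have hsep := hδ.2 C.m (by omega) C hCB le_rfl x hx Z hZ
      ⟨D₂.m, by omega, D₂.m_le, hZtyped⟩ r hr
    linarith
  refine ⟨⟨D₂.m, hkm, hZtyped⟩, D₂, hD₂c, hkm, ?_⟩
  -- quantitative spine-distance bound
  by_contra hcon
  push_neg at hcon
  have hn₀pos : (0 : ℝ) < n₀ := by linarith [hn₀.1]
  set ρ := (1 + δ₀⁻¹) * τ * r with hρdef
  have hρpos : 0 < ρ := by positivity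
  set r' := δ₀⁻¹ * τ * r with hr'def
  have hr'pos : 0 < r' := by positivity
  have hr'r : r' ≤ r := by
    have h1 : δ₀⁻¹ * τ ≤ 1 := by
      calc δ₀⁻¹ * τ ≤ δ₀⁻¹ * δ₀ := mul_le_mul_of_nonneg_left hτ (by positivity)
        _ = 1 := inv_mul_cancel₀ (ne_of_gt hδ₀pos)
    calc r' = δ₀⁻¹ * τ * r := hr'def
      _ ≤ 1 * r := mul_le_mul_of_nonneg_right h1 hr.le
      _ = r := one_mul r
  have hr'ρ : r' + τ * r = ρ := by rw [hρdef, hr'def]; ring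
  have hτrρ : τ * r < ρ := by
    have : 0 < r' := hr'pos
    linarith
  have hr'ltρ : r' < ρ := by
    have : 0 < τ * r := by positivity
    linarith
  obtain ⟨hS₁, hS₂⟩ := sups_lt_of_dxr_lt hr hdxr
  have hZne : Z.Nonempty := by
    obtain ⟨z, hz⟩ := D₂.carrier_nonempty
    exact ⟨z, hD₂c ▸ hz⟩
  obtain ⟨zZ, hzZ⟩ := hZne
  have hxC : x ∈ C.carrier := C.spine_self_subset_carrier hx
  have hxc_mem : x ∈ C.carrier ∩ Metric.ball x r := ⟨hxC, mem_ball_self hr⟩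
  have hxZ : Metric.infDist x Z < τ * r :=
    lt_of_le_of_lt (le_biSup (infDist_bound_on_ball hzZ) hxc_mem) hS₂
  obtain ⟨z₀, hz₀Z, hz₀d⟩ := (Metric.infDist_lt_iff ⟨zZ, hzZ⟩).mp hxZ
  have hD₂cal : D₂.carrier ∈ calAB ℬ := by rw [hD₂c]; exact hZ
  have hmiss : Metric.ball x (n₀ * ρ) ∩ D₂.spine C.m = ∅ := by
    rw [Set.eq_empty_iff_forall_notMem]
    rintro y ⟨hyb, hysp⟩
    have h1 : Metric.infDist x (D₂.spine C.m) ≤ dist x y :=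
      Metric.infDist_le_dist_of_mem hysp
    have h2 : dist y x < n₀ * ρ := mem_ball.mp hyb
    rw [dist_comm] at h2
    have h3 : n₀ * ρ = n₀ * (1 + δ₀⁻¹) * τ * r := by rw [hρdef]; ring
    linarith
  have hZρ : (D₂.carrier ∩ Metric.ball x ρ).Nonempty := by
    refine ⟨z₀, by rw [hD₂c]; exact hz₀Z, mem_ball.mpr ?_⟩
    rw [dist_comm]
    linarith
  obtain ⟨Y', hY'cal, ⟨u, hu1, hu2, hY'typed⟩, hagree⟩ :=
    hn₀.2 C.m (by omega) D₂ hD₂cal hkm x ρ hρpos hZρ hmiss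
  rw [hD₂c] at hagree
  have hsep := hδ.2 C.m (by omega) C hCB le_rfl x hx Y' hY'cal
    ⟨u, hu1, hu2, hY'typed⟩ r' hr'pos
  -- upper bound for `dxr x r' C.carrier Y'`
  have hb1 : ∀ z ∈ Y' ∩ Metric.ball x r', Metric.infDist z C.carrier ≤ τ * r := by
    rintro z ⟨hzY, hzb⟩
    have hzZ' : z ∈ Z := by
      have h : z ∈ Y' ∩ Metric.ball x ρ :=
        ⟨hzY, Metric.ball_subset_ball hr'ltρ.le hzb⟩
      rw [← hagree] at h
      exact h.1
    have hzr : z ∈ Metric.ball x r := Metric.ball_subset_ball hr'r hzb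
    exact le_of_lt (lt_of_le_of_lt (le_biSup (infDist_bound_on_ball hxC) ⟨hzZ', hzr⟩) hS₁)
  have hb2 : ∀ z ∈ C.carrier ∩ Metric.ball x r', Metric.infDist z Y' ≤ τ * r := by
    rintro z ⟨hzC, hzb⟩
    have hzd : Metric.infDist z Z < τ * r :=
      lt_of_le_of_lt (le_biSup (infDist_bound_on_ball hzZ)
        ⟨hzC, Metric.ball_subset_ball hr'r hzb⟩) hS₂
    obtain ⟨z', hz'Z, hz'd⟩ := (Metric.infDist_lt_iff ⟨zZ, hzZ⟩).mp hzd
    have hz'Y : z' ∈ Y' := by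
      have hz'b : z' ∈ Metric.ball x ρ := by
        rw [mem_ball]
        have hzx : dist z x < r' := mem_ball.mp hzb
        have h4 : dist z' x ≤ dist z' z + dist z x := dist_triangle z' z x
        rw [dist_comm z' z] at h4
        linarith
      have h : z' ∈ Z ∩ Metric.ball x ρ := ⟨hz'Z, hz'b⟩
      rw [hagree] at h
      exact h.1
    calc Metric.infDist z Y' ≤ dist z z' := Metric.infDist_le_dist_of_mem hz'Y
      _ ≤ τ * r := le_of_lt hz'd
  have hub : dxr x r' C.carrier Y' ≤ δ₀ := by
    have h := dxr_le_of_bounds hr'pos (by positivity) hb1 hb2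
    have heq : (1 / r') * (τ * r) = δ₀ := by
      rw [hr'def]
      field_simp
    rw [heq] at h
    exact h
  linarith

end DDTGen
end
end

section
/- Let d>0 be an integer and C>0, with Cε sufficiently small. Let x∈ℝ^N, r>0, and let P_1,P_2 be d-dimensional affine planes in ℝ^N such that dist(x,P_1)≤r/2 and d_{x,r}(P_1,P_2)<Cε. Then there is a constant C(d) depending only on d such that ‖Dπ_1−Dπ_2‖<C(d)·Cε and |π_1(y)−π_2(y)|<C(d)·Cε·(|y−x|+r) for every y∈ℝ^N, where π_i denotes the orthogonal projection onto P_i and Dπ_i denotes the orthogonal projection onto the linear subspace parallel to P_i (which is the constant derivative of the affine map π_i). -/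
open Metric Set
open scoped Classical

noncomputable section

namespace DDTGen

section Helpers

variable {V : Type*} [NormedAddCommGroup V] [InnerProductSpace ℝ V]
variable {P : AffineSubspace ℝ V} {π : V →ᵃ[ℝ] V} {p₀ : V}

theorem IsOrthProjOnto.apply_eq (hπ : IsOrthProjOnto P π) (hp₀ : p₀ ∈ P) (y : V) :
    π y = π.linear (y - p₀) + p₀ := by
  have h1 : π ((y - p₀) +ᵥ p₀) = π.linear (y - p₀) +ᵥ π p₀ := π.map_vadd p₀ (y - p₀)
  rw [hπ.2.1 p₀ hp₀, vadd_eq_add, vadd_eq_add, sub_add_cancel] at h1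
  exact h1

theorem IsOrthProjOnto.orth (hπ : IsOrthProjOnto P π) (y : V) {v : V}
    (hv : v ∈ P.direction) : inner ℝ (y - π y) v = (0 : ℝ) := by
  have hp : v +ᵥ π y ∈ P := AffineSubspace.vadd_mem_of_mem_direction hv (hπ.1 y)
  have h := hπ.2.2 y (v +ᵥ π y) hp
  simpa [vadd_eq_add, add_sub_cancel_right] using h

theorem IsOrthProjOnto.linear_mem (hπ : IsOrthProjOnto P π) (hp₀ : p₀ ∈ P) (w : V) :
    π.linear w ∈ P.direction := by
  have h1 : π (w + p₀) ∈ P := hπ.1 _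
  have h2 : π (w + p₀) = π.linear w + p₀ := by
    simpa using hπ.apply_eq hp₀ (w + p₀)
  have h3 := AffineSubspace.vsub_mem_direction h1 hp₀
  rw [h2] at h3
  simpa [vsub_eq_sub] using h3

theorem IsOrthProjOnto.linear_fix (hπ : IsOrthProjOnto P π) (hp₀ : p₀ ∈ P) {v : V}
    (hv : v ∈ P.direction) : π.linear v = v := by
  obtain ⟨p₁, hp₁, p₂, hp₂, rfl⟩ :=
    (AffineSubspace.mem_direction_iff_eq_vsub ⟨p₀, hp₀⟩ v).1 hv
  have e1 : π p₁ = π.linear (p₁ - p₀) + p₀ := hπ.apply_eq hp₀ p₁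
  have e2 : π p₂ = π.linear (p₂ - p₀) + p₀ := hπ.apply_eq hp₀ p₂
  rw [hπ.2.1 p₁ hp₁] at e1
  rw [hπ.2.1 p₂ hp₂] at e2
  have a1 : π.linear (p₁ - p₀) = p₁ - p₀ := eq_sub_of_add_eq e1.symm
  have a2 : π.linear (p₂ - p₀) = p₂ - p₀ := eq_sub_of_add_eq e2.symm
  rw [vsub_eq_sub, show p₁ - p₂ = (p₁ - p₀) - (p₂ - p₀) by abel, map_sub, a1, a2]

theorem IsOrthProjOnto.sub_linear_orth (hπ : IsOrthProjOnto P π) (hp₀ : p₀ ∈ P)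
    (w : V) {v : V} (hv : v ∈ P.direction) :
    inner ℝ (w - π.linear w) v = (0 : ℝ) := by
  have h := hπ.orth (w + p₀) hv
  have e : (w + p₀) - π (w + p₀) = w - π.linear w := by
    rw [hπ.apply_eq hp₀ (w + p₀)]
    simp
  rwa [e] at h

theorem IsOrthProjOnto.sa (hπ : IsOrthProjOnto P π) (hp₀ : p₀ ∈ P) (a b : V) :
    inner ℝ (π.linear a) b = (inner ℝ a (π.linear b) : ℝ) := by
  have h1 : inner ℝ (b - π.linear b) (π.linear a) = (0 : ℝ) :=
    hπ.sub_linear_orth hp₀ b (hπ.linear_mem hp₀ a)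
  have h2 : inner ℝ (a - π.linear a) (π.linear b) = (0 : ℝ) :=
    hπ.sub_linear_orth hp₀ a (hπ.linear_mem hp₀ b)
  have e1 : inner ℝ (π.linear a) b - inner ℝ (π.linear a) (π.linear b) = (0:ℝ) := by
    rw [← inner_sub_right]
    rw [real_inner_comm]
    exact h1
  have e2 : inner ℝ a (π.linear b) - inner ℝ (π.linear a) (π.linear b) = (0:ℝ) := by
    rw [← inner_sub_left]
    exact h2
  linarith

theorem IsOrthProjOnto.linear_norm_le (hπ : IsOrthProjOnto P π) (hp₀ : p₀ ∈ P) (w : V) :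
    ‖π.linear w‖ ≤ ‖w‖ := by
  have h : inner ℝ (w - π.linear w) (π.linear w) = (0 : ℝ) :=
    hπ.sub_linear_orth hp₀ w (hπ.linear_mem hp₀ w)
  have key := norm_add_sq_real (π.linear w) (w - π.linear w)
  rw [add_sub_cancel] at key
  rw [real_inner_comm] at h
  nlinarith [norm_nonneg (π.linear w), norm_nonneg w, sq_nonneg (‖w - π.linear w‖)]

theorem IsOrthProjOnto.nearest (hπ : IsOrthProjOnto P π) (y : V) {p : V} (hp : p ∈ P) :
    ‖y - π y‖ ≤ ‖y - p‖ := by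
  have hd : π y - p ∈ P.direction := by
    have := AffineSubspace.vsub_mem_direction (hπ.1 y) hp
    simpa [vsub_eq_sub] using this
  have h0 : inner ℝ (y - π y) (π y - p) = (0 : ℝ) := hπ.orth y hd
  have key := norm_add_sq_real (y - π y) (π y - p)
  rw [h0] at key
  have e : (y - π y) + (π y - p) = y - p := by abel
  rw [e] at key
  nlinarith [norm_nonneg (y - π y), norm_nonneg (y - p), sq_nonneg (‖π y - p‖)]

theorem IsOrthProjOnto.le_infDist' (hπ : IsOrthProjOnto P π)
    (hne : (P : Set V).Nonempty) (y : V) :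
    ‖y - π y‖ ≤ Metric.infDist y (P : Set V) := by
  by_contra h
  push_neg at h
  obtain ⟨p, hp, hd⟩ := (Metric.infDist_lt_iff hne).1 h
  rw [dist_eq_norm] at hd
  exact absurd (hπ.nearest y hp) (by linarith)

/-- bound elements by a bounded `biSup` over a set, for real-valued functions. -/
theorem le_biSup_of_bdd {α : Type*} {S : Set α} {f : α → ℝ} {M : ℝ}
    (hM : ∀ z ∈ S, f z ≤ M) {z : α} (hz : z ∈ S) :
    f z ≤ ⨆ w ∈ S, f w := by
  have hb : BddAbove (Set.range fun w => ⨆ _ : w ∈ S, f w) := by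
    refine ⟨max M 0, ?_⟩
    rintro y ⟨w, rfl⟩
    dsimp only
    by_cases hw : w ∈ S
    · rw [ciSup_pos hw]; exact le_max_of_le_left (hM w hw)
    · haveI : IsEmpty (w ∈ S) := ⟨hw⟩
      rw [Real.iSup_of_isEmpty]
      exact le_max_right _ _
  have h := le_ciSup hb z
  rwa [ciSup_pos hz] at h

/-- abstract comparison of two self-adjoint "projection-like" maps. -/
theorem proj_compare {f₁ f₂ : V →ₗ[ℝ] V} {c : ℝ} (hc : 0 ≤ c)
    (sa₁ : ∀ a b, inner ℝ (f₁ a) b = (inner ℝ a (f₁ b) : ℝ))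
    (sa₂ : ∀ a b, inner ℝ (f₂ a) b = (inner ℝ a (f₂ b) : ℝ))
    (H₁ : ∀ u, ‖f₁ u - f₂ (f₁ u)‖ ≤ c * ‖u‖)
    (H₂ : ∀ u, ‖f₂ u - f₁ (f₂ u)‖ ≤ c * ‖u‖) (w : V) :
    ‖f₁ w - f₂ w‖ ≤ 2 * c * ‖w‖ := by
  set g : V := f₂ (f₁ w) - f₂ w with hgdef
  have hg : ‖g‖ ≤ c * ‖w‖ := by
    have e0 : g = f₂ (f₁ w - w) := by rw [map_sub]
    have key : inner ℝ g g = (-(inner ℝ w (f₂ g - f₁ (f₂ g))) : ℝ) := by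
      calc inner ℝ g g = (inner ℝ (f₂ (f₁ w - w)) g : ℝ) := by rw [← e0]
        _ = inner ℝ (f₁ w - w) (f₂ g) := sa₂ _ _
        _ = inner ℝ (f₁ w) (f₂ g) - inner ℝ w (f₂ g) := inner_sub_left _ _ _
        _ = inner ℝ w (f₁ (f₂ g)) - inner ℝ w (f₂ g) := by rw [sa₁]
        _ = -(inner ℝ w (f₂ g - f₁ (f₂ g))) := by rw [inner_sub_right]; ring
    have h1 : ‖g‖ ^ 2 ≤ ‖w‖ * (c * ‖g‖) := by
      have e1 : (inner ℝ g g : ℝ) = ‖g‖ ^ 2 := real_inner_self_eq_norm_sq g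
      have h2 : |(inner ℝ w (f₂ g - f₁ (f₂ g)) : ℝ)| ≤ ‖w‖ * ‖f₂ g - f₁ (f₂ g)‖ :=
        abs_real_inner_le_norm _ _
      have h3 : ‖f₂ g - f₁ (f₂ g)‖ ≤ c * ‖g‖ := H₂ g
      have h4 : ‖w‖ * ‖f₂ g - f₁ (f₂ g)‖ ≤ ‖w‖ * (c * ‖g‖) :=
        mul_le_mul_of_nonneg_left h3 (norm_nonneg w)
      calc ‖g‖ ^ 2 = (inner ℝ g g : ℝ) := e1.symm
        _ = -(inner ℝ w (f₂ g - f₁ (f₂ g))) := key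
        _ ≤ |(inner ℝ w (f₂ g - f₁ (f₂ g)) : ℝ)| := neg_le_abs _
        _ ≤ ‖w‖ * ‖f₂ g - f₁ (f₂ g)‖ := h2
        _ ≤ ‖w‖ * (c * ‖g‖) := h4
    rcases eq_or_lt_of_le (norm_nonneg g) with h | h
    · rw [← h]; positivity
    · nlinarith
  have e2 : f₁ w - f₂ w = (f₁ w - f₂ (f₁ w)) + g := by rw [hgdef]; abel
  calc ‖f₁ w - f₂ w‖ = ‖(f₁ w - f₂ (f₁ w)) + g‖ := by rw [e2]
    _ ≤ ‖f₁ w - f₂ (f₁ w)‖ + ‖g‖ := norm_add_le _ _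
    _ ≤ c * ‖w‖ + c * ‖w‖ := add_le_add (H₁ w) hg
    _ = 2 * c * ‖w‖ := by ring

/-- directions of a nearby plane are almost preserved by the projection. -/
theorem dir_est {P P' : AffineSubspace ℝ V} {π : V →ᵃ[ℝ] V} {p₀ : V}
    (hπ : IsOrthProjOnto P π) (hp₀ : p₀ ∈ P) {x q : V} {r η : ℝ}
    (hr : 0 < r) (hη : 0 ≤ η) (hq : q ∈ P') (hqx : ‖q - x‖ + r / 4 < r)
    (hkey : ∀ z ∈ (P' : Set V) ∩ Metric.ball x r, ‖z - π z‖ ≤ r * η)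
    {v : V} (hv : v ∈ P'.direction) :
    ‖v - π.linear v‖ ≤ 8 * η * ‖v‖ := by
  rcases eq_or_ne v 0 with rfl | hv0
  · simp
  set u : V := ‖v‖⁻¹ • v with hudef
  have hnv : 0 < ‖v‖ := norm_pos_iff.mpr hv0
  have hunorm : ‖u‖ = 1 := by
    rw [hudef, norm_smul, norm_inv, norm_norm, inv_mul_cancel₀ hnv.ne']
  set z : V := q + (r / 4) • u with hzdef
  have hzP' : z ∈ P' := by
    have hmem : (r / 4) • u ∈ P'.direction := by
      exact Submodule.smul_mem _ _ (Submodule.smul_mem _ _ hv)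
    have := AffineSubspace.vadd_mem_of_mem_direction hmem hq
    simpa [hzdef, vadd_eq_add, add_comm] using this
  have hsnorm : ‖(r / 4) • u‖ = r / 4 := by
    rw [norm_smul, hunorm, mul_one, Real.norm_eq_abs, abs_of_pos (by linarith)]
  have hzball : z ∈ Metric.ball x r := by
    rw [Metric.mem_ball, dist_eq_norm]
    have e : z - x = (q - x) + (r / 4) • u := by rw [hzdef]; abel
    calc ‖z - x‖ = ‖(q - x) + (r / 4) • u‖ := by rw [e]
      _ ≤ ‖q - x‖ + ‖(r / 4) • u‖ := norm_add_le _ _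
      _ = ‖q - x‖ + r / 4 := by rw [hsnorm]
      _ < r := hqx
  have hqball : q ∈ Metric.ball x r := by
    rw [Metric.mem_ball, dist_eq_norm]
    linarith
  have h1 : ‖z - π z‖ ≤ r * η := hkey z ⟨hzP', hzball⟩
  have h2 : ‖q - π q‖ ≤ r * η := hkey q ⟨hq, hqball⟩
  have hdiff : z - π z - (q - π q) = (r / 4) • (u - π.linear u) := by
    have e1 : π z = π q + π.linear ((r / 4) • u) := by
      rw [hπ.apply_eq hp₀ z, hπ.apply_eq hp₀ q]
      have e : z - p₀ = (q - p₀) + (r / 4) • u := by rw [hzdef]; abel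
      rw [e, map_add]
      abel
    rw [e1, hzdef, map_smul, smul_sub]
    abel
  have h3 : ‖(r / 4) • (u - π.linear u)‖ ≤ 2 * (r * η) := by
    rw [← hdiff]
    calc ‖z - π z - (q - π q)‖ ≤ ‖z - π z‖ + ‖q - π q‖ := norm_sub_le _ _
      _ ≤ 2 * (r * η) := by linarith
  have h4 : ‖u - π.linear u‖ ≤ 8 * η := by
    rw [norm_smul, Real.norm_eq_abs, abs_of_pos (by linarith : (0:ℝ) < r / 4)] at h3
    nlinarith
  have e2 : v - π.linear v = ‖v‖ • (u - π.linear u) := by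
    rw [smul_sub, ← map_smul, hudef, smul_inv_smul₀ hnv.ne']
  rw [e2, norm_smul, Real.norm_eq_abs, abs_of_pos hnv]
  nlinarith

end Helpers

set_option maxHeartbeats 1000000 in
/-- **Lemma 4.1**: if two `d`-dimensional affine planes `P₁, P₂` of `ℝ^N`
satisfy `dist(x,P₁) ≤ r/2` and `d_{x,r}(P₁,P₂) < Cε` (with `Cε` small enough),
then their orthogonal projections `π₁, π₂` satisfy
`‖Dπ₁ − Dπ₂‖ < C(d)·Cε` and `|π₁(y) − π₂(y)| < C(d)·Cε·(|y−x|+r)` for all `y`,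
where `C(d)` depends only on `d`. -/
theorem statement11 (d : ℕ) (hd : 0 < d) :
    ∃ K κ : ℝ, 0 < K ∧ 0 < κ ∧
    ∀ (N : ℕ) (x : EuclideanSpace ℝ (Fin N)) (r Cc ε : ℝ)
      (P₁ P₂ : AffineSubspace ℝ (EuclideanSpace ℝ (Fin N)))
      (π₁ π₂ : EuclideanSpace ℝ (Fin N) →ᵃ[ℝ] EuclideanSpace ℝ (Fin N)),
      0 < r → 0 < Cc → 0 < ε → Cc * ε < κ →
      (P₁ : Set (EuclideanSpace ℝ (Fin N))).Nonempty →
      (P₂ : Set (EuclideanSpace ℝ (Fin N))).Nonempty →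
      Module.finrank ℝ P₁.direction = d →
      Module.finrank ℝ P₂.direction = d →
      IsOrthProjOnto P₁ π₁ → IsOrthProjOnto P₂ π₂ →
      Metric.infDist x (P₁ : Set (EuclideanSpace ℝ (Fin N))) ≤ r / 2 →
      ((P₂ : Set (EuclideanSpace ℝ (Fin N))) ∩ ball x r).Nonempty →
      dxr x r (P₁ : Set (EuclideanSpace ℝ (Fin N)))
        (P₂ : Set (EuclideanSpace ℝ (Fin N))) < Cc * ε →
      ‖LinearMap.toContinuousLinearMap (π₁.linear - π₂.linear)‖ < K * (Cc * ε) ∧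
      ∀ y : EuclideanSpace ℝ (Fin N),
        ‖π₁ y - π₂ y‖ < K * (Cc * ε) * (‖y - x‖ + r) := by
  refine ⟨20, 1/100, by norm_num, by norm_num, ?_⟩
  intro N x r Cc ε P₁ P₂ π₁ π₂ hr hCc hε hκ hP₁ne hP₂ne hrk₁ hrk₂ hπ₁ hπ₂ hxP₁ hP₂b hdxr
  set η : ℝ := Cc * ε with hηdef
  have hη0 : 0 < η := mul_pos hCc hε
  have hη1 : η < 1/100 := hκ
  have hrη : r * η < r / 4 := by nlinarith
  obtain ⟨p₀, hp₀⟩ := hP₁ne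
  obtain ⟨q₀, hq₀⟩ := hP₂ne
  set f₁ := π₁.linear with hf₁
  set f₂ := π₂.linear with hf₂
  -- extract pointwise bounds from dxr
  have hmax : max (⨆ z ∈ (P₂ : Set (EuclideanSpace ℝ (Fin N))) ∩ ball x r, Metric.infDist z (P₁ : Set (EuclideanSpace ℝ (Fin N))))
      (⨆ z ∈ (P₁ : Set (EuclideanSpace ℝ (Fin N))) ∩ ball x r, Metric.infDist z (P₂ : Set (EuclideanSpace ℝ (Fin N)))) < r * η := by
    have h := hdxr
    rw [dxr] at h
    have h2 : (1 / r) * max (⨆ z ∈ (P₂ : Set (EuclideanSpace ℝ (Fin N))) ∩ ball x r, Metric.infDist z (P₁ : Set (EuclideanSpace ℝ (Fin N))))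
        (⨆ z ∈ (P₁ : Set (EuclideanSpace ℝ (Fin N))) ∩ ball x r, Metric.infDist z (P₂ : Set (EuclideanSpace ℝ (Fin N)))) < η := h
    rw [one_div, inv_mul_eq_div, div_lt_iff₀ hr] at h2
    linarith [h2, mul_comm η r]
  have key₁ : ∀ z ∈ (P₁ : Set (EuclideanSpace ℝ (Fin N))) ∩ ball x r, ‖z - π₂ z‖ ≤ r * η := by
    intro z hz
    have hM : ∀ w ∈ (P₁ : Set (EuclideanSpace ℝ (Fin N))) ∩ ball x r,
        Metric.infDist w (P₂ : Set (EuclideanSpace ℝ (Fin N))) ≤ r + dist x q₀ := by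
      intro w hw
      calc Metric.infDist w (P₂ : Set (EuclideanSpace ℝ (Fin N))) ≤ dist w q₀ := Metric.infDist_le_dist_of_mem hq₀
        _ ≤ dist w x + dist x q₀ := dist_triangle _ _ _
        _ ≤ r + dist x q₀ := by
            have := mem_ball.1 hw.2; linarith
    have h1 : Metric.infDist z (P₂ : Set (EuclideanSpace ℝ (Fin N))) ≤
        ⨆ w ∈ (P₁ : Set (EuclideanSpace ℝ (Fin N))) ∩ ball x r, Metric.infDist w (P₂ : Set (EuclideanSpace ℝ (Fin N))) :=
      le_biSup_of_bdd hM hz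
    have h2 : ‖z - π₂ z‖ ≤ Metric.infDist z (P₂ : Set (EuclideanSpace ℝ (Fin N))) := hπ₂.le_infDist' ⟨q₀, hq₀⟩ z
    have h3 := le_max_right (⨆ z ∈ (P₂ : Set (EuclideanSpace ℝ (Fin N))) ∩ ball x r, Metric.infDist z (P₁ : Set (EuclideanSpace ℝ (Fin N))))
      (⨆ z ∈ (P₁ : Set (EuclideanSpace ℝ (Fin N))) ∩ ball x r, Metric.infDist z (P₂ : Set (EuclideanSpace ℝ (Fin N))))
    linarith
  have key₂ : ∀ z ∈ (P₂ : Set (EuclideanSpace ℝ (Fin N))) ∩ ball x r, ‖z - π₁ z‖ ≤ r * η := by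
    intro z hz
    have hM : ∀ w ∈ (P₂ : Set (EuclideanSpace ℝ (Fin N))) ∩ ball x r,
        Metric.infDist w (P₁ : Set (EuclideanSpace ℝ (Fin N))) ≤ r + dist x p₀ := by
      intro w hw
      calc Metric.infDist w (P₁ : Set (EuclideanSpace ℝ (Fin N))) ≤ dist w p₀ := Metric.infDist_le_dist_of_mem hp₀
        _ ≤ dist w x + dist x p₀ := dist_triangle _ _ _
        _ ≤ r + dist x p₀ := by
            have := mem_ball.1 hw.2; linarith
    have h1 : Metric.infDist z (P₁ : Set (EuclideanSpace ℝ (Fin N))) ≤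
        ⨆ w ∈ (P₂ : Set (EuclideanSpace ℝ (Fin N))) ∩ ball x r, Metric.infDist w (P₁ : Set (EuclideanSpace ℝ (Fin N))) :=
      le_biSup_of_bdd hM hz
    have h2 : ‖z - π₁ z‖ ≤ Metric.infDist z (P₁ : Set (EuclideanSpace ℝ (Fin N))) := hπ₁.le_infDist' ⟨p₀, hp₀⟩ z
    have h3 := le_max_left (⨆ z ∈ (P₂ : Set (EuclideanSpace ℝ (Fin N))) ∩ ball x r, Metric.infDist z (P₁ : Set (EuclideanSpace ℝ (Fin N))))
      (⨆ z ∈ (P₁ : Set (EuclideanSpace ℝ (Fin N))) ∩ ball x r, Metric.infDist z (P₂ : Set (EuclideanSpace ℝ (Fin N))))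
    linarith
  -- basic geometry
  have hx₁ : ‖x - π₁ x‖ ≤ r / 2 := le_trans (hπ₁.le_infDist' ⟨p₀, hp₀⟩ x) hxP₁
  have hπ₁x_mem : π₁ x ∈ (P₁ : Set (EuclideanSpace ℝ (Fin N))) ∩ ball x r := by
    refine ⟨hπ₁.1 x, ?_⟩
    rw [mem_ball, dist_eq_norm]
    rw [show π₁ x - x = -(x - π₁ x) by abel, norm_neg]
    linarith
  have hA : ‖π₁ x - π₂ (π₁ x)‖ ≤ r * η := key₁ _ hπ₁x_mem
  have hx₂ : ‖x - π₂ x‖ ≤ r / 2 + r * η := by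
    have h1 : ‖x - π₂ x‖ ≤ ‖x - π₂ (π₁ x)‖ := hπ₂.nearest x (hπ₂.1 (π₁ x))
    have h2 : ‖x - π₂ (π₁ x)‖ ≤ ‖x - π₁ x‖ + ‖π₁ x - π₂ (π₁ x)‖ := by
      rw [show x - π₂ (π₁ x) = (x - π₁ x) + (π₁ x - π₂ (π₁ x)) by abel]
      exact norm_add_le _ _
    linarith
  -- the two key direction estimates
  have H₁ : ∀ u, ‖f₁ u - f₂ (f₁ u)‖ ≤ (8 * η) * ‖u‖ := by
    intro u
    have hv : f₁ u ∈ P₁.direction := hπ₁.linear_mem hp₀ u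
    have hqx : ‖π₁ x - x‖ + r / 4 < r := by
      rw [show π₁ x - x = -(x - π₁ x) by abel, norm_neg]
      linarith
    have h := dir_est hπ₂ hq₀ hr (le_of_lt hη0) (hπ₁.1 x) hqx key₁ hv
    calc ‖f₁ u - f₂ (f₁ u)‖ ≤ 8 * η * ‖f₁ u‖ := h
      _ ≤ 8 * η * ‖u‖ := by
          have := hπ₁.linear_norm_le hp₀ u
          nlinarith
  have H₂ : ∀ u, ‖f₂ u - f₁ (f₂ u)‖ ≤ (8 * η) * ‖u‖ := by
    intro u
    have hv : f₂ u ∈ P₂.direction := hπ₂.linear_mem hq₀ u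
    have hqx : ‖π₂ x - x‖ + r / 4 < r := by
      rw [show π₂ x - x = -(x - π₂ x) by abel, norm_neg]
      linarith
    have h := dir_est hπ₁ hp₀ hr (le_of_lt hη0) (hπ₂.1 x) hqx key₂ hv
    calc ‖f₂ u - f₁ (f₂ u)‖ ≤ 8 * η * ‖f₂ u‖ := h
      _ ≤ 8 * η * ‖u‖ := by
          have := hπ₂.linear_norm_le hq₀ u
          nlinarith
  have hmain : ∀ w, ‖f₁ w - f₂ w‖ ≤ 16 * η * ‖w‖ := by
    intro w
    have h := proj_compare (by positivity) (hπ₁.sa hp₀) (hπ₂.sa hq₀) H₁ H₂ w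
    calc ‖f₁ w - f₂ w‖ ≤ 2 * (8 * η) * ‖w‖ := h
      _ = 16 * η * ‖w‖ := by ring
  constructor
  · have hop : ‖LinearMap.toContinuousLinearMap (π₁.linear - π₂.linear)‖ ≤ 16 * η := by
      apply ContinuousLinearMap.opNorm_le_bound _ (by positivity)
      intro w
      rw [LinearMap.coe_toContinuousLinearMap']
      simpa using hmain w
    have : 16 * η < 20 * η := by linarith
    calc ‖LinearMap.toContinuousLinearMap (π₁.linear - π₂.linear)‖ ≤ 16 * η := hop
      _ < 20 * (Cc * ε) := by rw [← hηdef]; linarith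
  · intro y
    have hf₁0 : f₁ (π₁ x - x) = 0 := by
      have e : π₁ x - x = -((x - p₀) - f₁ (x - p₀)) := by
        rw [hπ₁.apply_eq hp₀ x]; abel
      rw [e, map_neg, map_sub, hπ₁.linear_fix hp₀ (hπ₁.linear_mem hp₀ (x - p₀))]
      simp [hf₁]
    have hfd : ‖f₂ (π₁ x - x)‖ ≤ 8 * r * η := by
      have h1 : ‖f₁ (π₁ x - x) - f₂ (π₁ x - x)‖ ≤ 16 * η * ‖π₁ x - x‖ := hmain _
      rw [hf₁0, zero_sub, norm_neg] at h1
      have h2 : ‖π₁ x - x‖ ≤ r / 2 := by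
        rw [show π₁ x - x = -(x - π₁ x) by abel, norm_neg]; exact hx₁
      nlinarith
    have hxx : ‖π₁ x - π₂ x‖ ≤ 9 * r * η := by
      have e2 : π₁ x - π₂ x = (π₁ x - π₂ (π₁ x)) + f₂ (π₁ x - x) := by
        rw [hπ₂.apply_eq hq₀ (π₁ x), hπ₂.apply_eq hq₀ x,
          show π₁ x - q₀ = (x - q₀) + (π₁ x - x) by abel, map_add]
        abel
      calc ‖π₁ x - π₂ x‖ = ‖(π₁ x - π₂ (π₁ x)) + f₂ (π₁ x - x)‖ := by rw [e2]
        _ ≤ ‖π₁ x - π₂ (π₁ x)‖ + ‖f₂ (π₁ x - x)‖ := norm_add_le _ _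
        _ ≤ 9 * r * η := by linarith
    have e : π₁ y - π₂ y = (π₁ x - π₂ x) + (f₁ (y - x) - f₂ (y - x)) := by
      rw [hπ₁.apply_eq hp₀ y, hπ₁.apply_eq hp₀ x, hπ₂.apply_eq hq₀ y, hπ₂.apply_eq hq₀ x,
        show y - p₀ = (x - p₀) + (y - x) by abel,
        show y - q₀ = (x - q₀) + (y - x) by abel, map_add, map_add]
      abel
    have hb : ‖π₁ y - π₂ y‖ ≤ 9 * r * η + 16 * η * ‖y - x‖ := by
      calc ‖π₁ y - π₂ y‖ = ‖(π₁ x - π₂ x) + (f₁ (y - x) - f₂ (y - x))‖ := by rw [e]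
        _ ≤ ‖π₁ x - π₂ x‖ + ‖f₁ (y - x) - f₂ (y - x)‖ := norm_add_le _ _
        _ ≤ 9 * r * η + 16 * η * ‖y - x‖ := add_le_add hxx (hmain _)
    have hfin : 9 * r * η + 16 * η * ‖y - x‖ < 20 * η * (‖y - x‖ + r) := by
      nlinarith [norm_nonneg (y - x)]
    calc ‖π₁ y - π₂ y‖ ≤ 9 * r * η + 16 * η * ‖y - x‖ := hb
      _ < 20 * (Cc * ε) * (‖y - x‖ + r) := by rw [← hηdef]; linarith

end DDTGen
end
end
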